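/- For every instance (X, Y, s, b) of Numerical Matching with Target Sums with |X| = |Y| = n ≥ 1, a maximum common connected induced subgraph of the base gadgets B_G and B_H has exactly |V(B_G)| − n + 1 vertices. -/

import Mathlib

namespace MCSPaper

/-- One directed step of the adjacency of a chain of triangle gadgets `K^v_w`.
Within gadget `j` (vertices: `(j,0) = v'`, `(j,1) = u`, `(j,2) = w`, where the
attachment vertex `v` of gadget `j` is the pendant `w` of gadget `j-1`):
edges `v'-u`, `v'-w`, and the attachment edges `w_{j}-v'_{j+1}`, `w_j-u_{j+1}`. -/
def chainStep (j t j' t' : ℕ) : Prop :=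
  (j' = j ∧ t = 0 ∧ (t' = 1 ∨ t' = 2)) ∨ (j' = j + 1 ∧ t = 2 ∧ (t' = 0 ∨ t' = 1))

/-- Vertices of the base gadgets `B_G`/`B_H` of the NMwTS reduction.
`g = false` selects the chordless `C`-gadgets, `g = true` the `D`-gadgets with chords.
For each `i` and `g` there is a cycle through the hub (`x̄` resp. `ȳ`) consisting of
two arcs (`side = false/true`) of `S` internal vertices each, meeting at `far i g`
(the vertex `v'`), the anchor vertex `anchor i g` and the prime anchor `panchor i g`,
and `apmid j` are the middle vertices of the `n-1` anchor paths. -/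
inductive BaseVert (n S : ℕ) : Type
  | hub
  | arc (i : Fin n) (g : Bool) (side : Bool) (p : Fin S)
  | far (i : Fin n) (g : Bool)
  | anchor (i : Fin n) (g : Bool)
  | panchor (i : Fin n) (g : Bool)
  | apmid (j : Fin (n - 1))
  deriving DecidableEq, Fintype

/-- Adjacency (one direction) of the base gadget; `gb` selects on which gadget type
(`true` = `D`-gadgets, as in `B_G`; `false` = `C`-gadgets, as in `B_H`) the anchor
paths between consecutive prime anchor vertices are placed. -/
def baseRel (n S : ℕ) (gb : Bool) : BaseVert n S → BaseVert n S → Prop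
  | .hub, .arc _ _ _ p => p.val = 0
  | .arc i g s p, .arc i' g' s' q =>
      i = i' ∧ g = g' ∧
        ((s = s' ∧ q.val = p.val + 1) ∨
          (g = true ∧ s ≠ s' ∧ ((p.val = 0 ∧ q.val = 0) ∨ (p.val + 1 = S ∧ q.val + 1 = S))))
  | .arc i g _ p, .far i' g' => i = i' ∧ g = g' ∧ p.val + 1 = S
  | .far i g, .panchor i' g' => i = i' ∧ g = g'
  | .panchor i g, .anchor i' g' => i = i' ∧ g = g'
  | .panchor i g, .apmid j => g = gb ∧ (i.val = j.val ∨ i.val = j.val + 1)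
  | _, _ => False

/-- The base gadget graph (`B_G` for `gb = true`, `B_H` for `gb = false`). -/
def baseGraph (n S : ℕ) (gb : Bool) : SimpleGraph (BaseVert n S) :=
  SimpleGraph.fromRel (baseRel n S gb)

/-- `Σ_s = ∑ i (s(x_i) + s(y_i))`. -/
def SigmaS (n : ℕ) (sx sy : Fin n → ℕ) : ℕ := ∑ i, (sx i + sy i)

/-- The vertices of the `xy`-paths of the graph `G`: for each `i`, an `x`-chain of
`s(x_i)` triangle gadgets, a `y`-chain of `s(y_i)` triangle gadgets and a
separating path of `3` vertices. -/
inductive XYVert (n : ℕ) (sx sy : Fin n → ℕ) : Type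
  | xv (i : Fin n) (j : Fin (sx i)) (t : Fin 3)
  | yv (i : Fin n) (j : Fin (sy i)) (t : Fin 3)
  | sep (i : Fin n) (t : Fin 3)
  deriving DecidableEq, Fintype

/-- Adjacency (one direction) of the graph `G` of the reduction: the base gadget `B_G`
together with, for each `i`, the `x`-chain attached at the anchor `c_i` of the `i`-th
`C`-gadget, the `y`-chain attached at the anchor `c_{i+n}` of the `i`-th `D`-gadget, and
the separating path joining the pendant ends of the two chains. -/
def graphGRel (n : ℕ) (sx sy : Fin n → ℕ) :
    BaseVert n (SigmaS n sx sy) ⊕ XYVert n sx sy →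
      BaseVert n (SigmaS n sx sy) ⊕ XYVert n sx sy → Prop
  | .inl a, .inl a' => baseRel n (SigmaS n sx sy) true a a'
  | .inl (.anchor i false), .inr (.xv i' j t) => i = i' ∧ j.val = 0 ∧ (t.val = 0 ∨ t.val = 1)
  | .inl (.anchor i true), .inr (.yv i' j t) => i = i' ∧ j.val = 0 ∧ (t.val = 0 ∨ t.val = 1)
  | .inr (.xv i j t), .inr (.xv i' j' t') => i = i' ∧ chainStep j.val t.val j'.val t'.val
  | .inr (.yv i j t), .inr (.yv i' j' t') => i = i' ∧ chainStep j.val t.val j'.val t'.val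
  | .inr (.xv i j t), .inr (.sep i' t') => i = i' ∧ j.val + 1 = sx i ∧ t.val = 2 ∧ t'.val = 0
  | .inr (.sep i t), .inr (.sep i' t') => i = i' ∧ t'.val = t.val + 1
  | .inr (.sep i t), .inr (.yv i' j t') => i = i' ∧ t.val = 2 ∧ j.val + 1 = sy i' ∧ t'.val = 2
  | _, _ => False

/-- The graph `G` of the NMwTS reduction. -/
def graphG (n : ℕ) (sx sy : Fin n → ℕ) :
    SimpleGraph (BaseVert n (SigmaS n sx sy) ⊕ XYVert n sx sy) :=
  SimpleGraph.fromRel (graphGRel n sx sy)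

/-- The vertices of the `b`-paths of the graph `H`: for each `i`, a chain of
`b_i + 1` triangle gadgets. -/
inductive BVert (n : ℕ) (b : Fin n → ℕ) : Type
  | bv (i : Fin n) (j : Fin (b i + 1)) (t : Fin 3)
  deriving DecidableEq, Fintype

/-- Adjacency (one direction) of the graph `H` of the reduction: the base gadget `B_H`
together with, for each `i`, the `b`-chain of `b_i + 1` triangle gadgets attached at the
anchor `c_i`, whose final pendant vertex is joined to the anchor `c_{i+n}`. -/
def graphHRel (n : ℕ) (sx sy b : Fin n → ℕ) :
    BaseVert n (SigmaS n sx sy) ⊕ BVert n b →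
      BaseVert n (SigmaS n sx sy) ⊕ BVert n b → Prop
  | .inl a, .inl a' => baseRel n (SigmaS n sx sy) false a a'
  | .inl (.anchor i false), .inr (.bv i' j t) => i = i' ∧ j.val = 0 ∧ (t.val = 0 ∨ t.val = 1)
  | .inr (.bv i j t), .inl (.anchor i' true) => i = i' ∧ j.val = b i ∧ t.val = 2
  | .inr (.bv i j t), .inr (.bv i' j' t') => i = i' ∧ chainStep j.val t.val j'.val t'.val
  | _, _ => False

/-- The graph `H` of the NMwTS reduction. -/
def graphH (n : ℕ) (sx sy b : Fin n → ℕ) :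
    SimpleGraph (BaseVert n (SigmaS n sx sy) ⊕ BVert n b) :=
  SimpleGraph.fromRel (graphHRel n sx sy b)

/-- A graph is biconnected if it has more than two vertices and deleting any single
vertex leaves it connected. -/
def Biconnected {V : Type*} [Fintype V] (G : SimpleGraph V) : Prop :=
  2 < Fintype.card V ∧ ∀ v : V, (G.induce {u | u ≠ v}).Connected

/-- `R`, `S` carry a common connected induced subgraph of `G` and `H`:
`G[R]` is connected and isomorphic to `H[S]`. -/
def IsCCIS {α β : Type*} (G : SimpleGraph α) (H : SimpleGraph β)
    (R : Set α) (S : Set β) : Prop :=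
  (G.induce R).Connected ∧ Nonempty (G.induce R ≃g H.induce S)


-- test: closure set defs
def gadSet (n S : ℕ) (i : Fin n) (g : Bool) : Set (BaseVert n S) :=
  {v | match v with
   | .arc i' g' _ _ => i' = i ∧ g' = g
   | .far i' g' => i' = i ∧ g' = g
   | .panchor i' g' => i' = i ∧ g' = g
   | .anchor i' g' => i' = i ∧ g' = g
   | _ => False}

def blockSet (n S : ℕ) (gb : Bool) : Set (BaseVert n S) :=
  {v | match v with
   | .arc _ g' _ _ => g' = gb
   | .far _ g' => g' = gb
   | .panchor _ g' => g' = gb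
   | .anchor _ g' => g' = gb
   | .apmid _ => True
   | .hub => False}

variable {n S : ℕ}

lemma gad_closed {gb g : Bool} (hg : g ≠ gb) {i : Fin n} {u v : BaseVert n S}
    (hu : u ∈ gadSet n S i g) (hv : v ≠ .hub) (h : (baseGraph n S gb).Adj u v) :
    v ∈ gadSet n S i g := by
  rw [baseGraph, SimpleGraph.fromRel_adj] at h
  obtain ⟨-, h | h⟩ := h <;>
  · cases u <;> cases v <;> simp_all [baseRel, gadSet] <;> simp_all

lemma block_closed {gb : Bool} {u v : BaseVert n S}
    (hu : u ∈ blockSet n S gb) (hv : v ≠ .hub) (h : (baseGraph n S gb).Adj u v) :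
    v ∈ blockSet n S gb := by
  rw [baseGraph, SimpleGraph.fromRel_adj] at h
  obtain ⟨-, h | h⟩ := h <;>
  · cases u <;> cases v <;> simp_all [baseRel, blockSet] <;> simp_all

lemma cover {gb : Bool} {v : BaseVert n S} (hv : v ≠ .hub) :
    v ∈ blockSet n S gb ∨ ∃ i, v ∈ gadSet n S i (!gb) := by
  cases v <;> simp_all [blockSet, gadSet] <;>
    first
    | (rename_i g _ _; cases g <;> cases gb <;> simp)
    | (rename_i g; cases g <;> cases gb <;> simp)

lemma anchor_not_gad {i i' : Fin n} {g g' : Bool} (h : g' ≠ g) :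
    (BaseVert.anchor i' g' : BaseVert n S) ∉ gadSet n S i g := by
  simp [gadSet, h]

lemma anchor_not_block {i' : Fin n} {gb : Bool} :
    (BaseVert.anchor i' (!gb) : BaseVert n S) ∉ blockSet n S gb := by
  simp [blockSet]

-- triangle-freeness of the C-block
lemma block_triangle_free {a b c : BaseVert n S}
    (ha : a ∈ blockSet n S false) (hb : b ∈ blockSet n S false) (hc : c ∈ blockSet n S false)
    (hab : (baseGraph n S false).Adj a b) (hbc : (baseGraph n S false).Adj b c)
    (hac : (baseGraph n S false).Adj a c) : False := by
  rw [baseGraph, SimpleGraph.fromRel_adj] at hab hbc hac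
  obtain ⟨hab0, hab⟩ := hab; obtain ⟨hbc0, hbc⟩ := hbc; obtain ⟨hac0, hac⟩ := hac
  cases a <;> cases b <;> cases c <;> simp_all [baseRel, blockSet] <;> omega

lemma adj_arc_cases {gb : Bool} {i : Fin n} {g s : Bool} {p : Fin S} {w : BaseVert n S}
    (h : (baseGraph n S gb).Adj (.arc i g s p) w) :
    (w = .hub ∧ p.val = 0) ∨
    (∃ q : Fin S, w = .arc i g s q ∧ (q.val = p.val + 1 ∨ p.val = q.val + 1)) ∨
    (w = .arc i g (!s) p ∧ g = true ∧ (p.val = 0 ∨ p.val + 1 = S)) ∨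
    (w = .far i g ∧ p.val + 1 = S) := by
  rw [baseGraph, SimpleGraph.fromRel_adj] at h
  obtain ⟨hne, h | h⟩ := h
  · cases w with
    | arc i' g' s' q =>
        obtain ⟨rfl, rfl, ⟨rfl, hq⟩ | ⟨hg, hss, hc⟩⟩ := h
        · exact Or.inr (Or.inl ⟨q, rfl, Or.inl hq⟩)
        · have hs' : s' = !s := by cases s <;> cases s' <;> simp_all
          have hq : q = p := by
            apply Fin.ext; rcases hc with ⟨h1, h2⟩ | ⟨h1, h2⟩ <;> omega
          subst hs' hq
          exact Or.inr (Or.inr (Or.inl ⟨rfl, hg, by rcases hc with ⟨h1, _⟩ | ⟨h1, _⟩ <;> omega⟩))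
    | far i' g' => obtain ⟨rfl, rfl, hp⟩ := h; exact Or.inr (Or.inr (Or.inr ⟨rfl, hp⟩))
    | hub => simp [baseRel] at h
    | anchor => simp [baseRel] at h
    | panchor => simp [baseRel] at h
    | apmid => simp [baseRel] at h
  · cases w with
    | arc i' g' s' q =>
        obtain ⟨rfl, rfl, ⟨rfl, hq⟩ | ⟨hg, hss, hc⟩⟩ := h
        · exact Or.inr (Or.inl ⟨q, rfl, Or.inr hq⟩)
        · have hs' : s' = !s := by cases s <;> cases s' <;> simp_all
          have hq : q = p := by
            apply Fin.ext; rcases hc with ⟨h1, h2⟩ | ⟨h1, h2⟩ <;> omega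
          subst hs' hq
          exact Or.inr (Or.inr (Or.inl ⟨rfl, hg, by rcases hc with ⟨h1, _⟩ | ⟨h1, _⟩ <;> omega⟩))
    | hub => exact Or.inl ⟨rfl, h⟩
    | far => simp [baseRel] at h
    | anchor => simp [baseRel] at h
    | panchor => simp [baseRel] at h
    | apmid => simp [baseRel] at h

lemma nbhd_small {gb : Bool} (hS : 2 ≤ S) {v : BaseVert n S} (hv : v ≠ .hub) :
    ∃ l : List (BaseVert n S), l.length ≤ 4 ∧
      ∀ w, (baseGraph n S gb).Adj v w → w ∈ l := by
  classical
  cases v with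
  | hub => exact absurd rfl hv
  | arc i g s p =>
      refine ⟨[if p.val = 0 then .hub else .far i g,
        .arc i g s ⟨(p.val + 1) % S, Nat.mod_lt _ (by omega)⟩,
        .arc i g s ⟨p.val - 1, by omega⟩, .arc i g (!s) p], by simp, ?_⟩
      intro w hw
      rcases adj_arc_cases hw with ⟨rfl, h0⟩ | ⟨q, rfl, hq | hq⟩ | ⟨rfl, -, -⟩ | ⟨rfl, hp⟩
      · simp [h0]
      · have : q = ⟨(p.val + 1) % S, Nat.mod_lt _ (by omega)⟩ := by
          apply Fin.ext; simp [Nat.mod_eq_of_lt (by omega : p.val + 1 < S), hq]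
        simp [this]
      · have : q = ⟨p.val - 1, by omega⟩ := by apply Fin.ext; simp; omega
        simp [this]
      · simp
      · have hp0 : ¬ p.val = 0 := by omega
        simp [hp0]
  | far i g =>
      refine ⟨[.arc i g false ⟨S - 1, by omega⟩, .arc i g true ⟨S - 1, by omega⟩,
        .panchor i g], by simp, ?_⟩
      intro w hw
      rw [baseGraph, SimpleGraph.fromRel_adj] at hw
      obtain ⟨hne, hw | hw⟩ := hw
      · cases w <;> simp_all [baseRel]
      · cases w with
        | arc i' g' s' q =>
            obtain ⟨rfl, rfl, hq⟩ := hw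
            have : q = (⟨S - 1, by omega⟩ : Fin S) := by apply Fin.ext; simp; omega
            cases s' <;> simp [this]
        | _ => simp_all [baseRel]
  | anchor i g =>
      refine ⟨[.panchor i g], by simp, ?_⟩
      intro w hw
      rw [baseGraph, SimpleGraph.fromRel_adj] at hw
      obtain ⟨hne, hw | hw⟩ := hw <;> cases w <;> simp_all [baseRel]
  | panchor i g =>
      by_cases hn1 : 1 ≤ n - 1
      · refine ⟨[.far i g, .anchor i g, .apmid ⟨min i.val (n-2), by omega⟩,
          .apmid ⟨min (i.val - 1) (n-2), by omega⟩], by simp, ?_⟩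
        intro w hw
        rw [baseGraph, SimpleGraph.fromRel_adj] at hw
        obtain ⟨hne, hw | hw⟩ := hw <;> cases w <;> simp_all [baseRel]
        rename_i j
        obtain ⟨-, h2 | h2⟩ := hw
        · have : j = (⟨min i.val (n-2), by omega⟩ : Fin (n-1)) := by
            apply Fin.ext; have := j.isLt; simp; omega
          simp [this]
        · have : j = (⟨min (i.val - 1) (n-2), by omega⟩ : Fin (n-1)) := by
            apply Fin.ext; have := j.isLt; simp; omega
          simp [this]
      · refine ⟨[.far i g, .anchor i g], by simp, ?_⟩
        intro w hw
        rw [baseGraph, SimpleGraph.fromRel_adj] at hw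
        obtain ⟨hne, hw | hw⟩ := hw <;> cases w <;> simp_all [baseRel] <;>
          · rename_i j; exact absurd j.isLt (by omega)
  | apmid j =>
      refine ⟨[.panchor ⟨j.val, by omega⟩ gb, .panchor ⟨j.val + 1, by omega⟩ gb], by simp, ?_⟩
      intro w hw
      rw [baseGraph, SimpleGraph.fromRel_adj] at hw
      obtain ⟨hne, hw | hw⟩ := hw <;> cases w <;> simp_all [baseRel]
      rename_i i'
      obtain ⟨h1, h2 | h2⟩ := hw
      · exact Or.inl (Fin.ext (by simp [h2]))
      · exact Or.inr (Fin.ext (by simp [h2]))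

open SimpleGraph

lemma reach_closed {gb : Bool} {X : Set (BaseVert n S)} (hX : (BaseVert.hub : BaseVert n S) ∉ X)
    {K : Set (BaseVert n S)}
    (hK : ∀ a b : BaseVert n S, a ∈ K → b ≠ .hub → (baseGraph n S gb).Adj a b → b ∈ K)
    {u v : X} (h : ((baseGraph n S gb).induce X).Reachable u v) (hu : ↑u ∈ K) : ↑v ∈ K := by
  obtain ⟨w⟩ := h
  induction w with
  | nil => exact hu
  | cons h p ih =>
      rename_i a b c
      refine ih ?_
      have hadj : (baseGraph n S gb).Adj ↑a ↑b := h
      exact hK _ _ hu (fun hb => hX (hb ▸ b.2)) hadj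

lemma reach_of_adj {G : SimpleGraph (BaseVert n S)} {X : Set (BaseVert n S)} {a b : BaseVert n S}
    (ha : a ∈ X) (hb : b ∈ X) (h : G.Adj a b) :
    (G.induce X).Reachable ⟨a, ha⟩ ⟨b, hb⟩ :=
  SimpleGraph.Adj.reachable (by exact h)

lemma adj_hub_arc0 {gb : Bool} {i : Fin n} {g s : Bool} {p : Fin S} (hp : p.val = 0) :
    (baseGraph n S gb).Adj .hub (.arc i g s p) := by
  rw [baseGraph, SimpleGraph.fromRel_adj]
  exact ⟨by simp, Or.inl hp⟩

lemma adj_arc_succ {gb : Bool} {i : Fin n} {g s : Bool} {p q : Fin S} (h : q.val = p.val + 1) :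
    (baseGraph n S gb).Adj (.arc i g s p) (.arc i g s q) := by
  rw [baseGraph, SimpleGraph.fromRel_adj]
  refine ⟨by simp; exact Fin.ne_of_val_ne (by omega), Or.inl ⟨rfl, rfl, Or.inl ⟨rfl, h⟩⟩⟩

lemma adj_arc_far {gb : Bool} {i : Fin n} {g s : Bool} {p : Fin S} (hp : p.val + 1 = S) :
    (baseGraph n S gb).Adj (.arc i g s p) (.far i g) := by
  rw [baseGraph, SimpleGraph.fromRel_adj]
  exact ⟨by simp, Or.inl ⟨rfl, rfl, hp⟩⟩

lemma adj_far_panchor {gb : Bool} {i : Fin n} {g : Bool} :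
    (baseGraph n S gb).Adj (.far i g) (.panchor i g) := by
  rw [baseGraph, SimpleGraph.fromRel_adj]
  exact ⟨by simp, Or.inl ⟨rfl, rfl⟩⟩

lemma adj_panchor_anchor {gb : Bool} {i : Fin n} {g : Bool} :
    (baseGraph n S gb).Adj (.panchor i g) (.anchor i g) := by
  rw [baseGraph, SimpleGraph.fromRel_adj]
  exact ⟨by simp, Or.inl ⟨rfl, rfl⟩⟩

lemma adj_panchor_apmid {gb : Bool} {i : Fin n} {j : Fin (n-1)}
    (hij : i.val = j.val ∨ i.val = j.val + 1) :
    (baseGraph n S gb).Adj (.panchor i gb) (.apmid j) := by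
  rw [baseGraph, SimpleGraph.fromRel_adj]
  exact ⟨by simp, Or.inl ⟨rfl, hij⟩⟩

lemma reach_hub_arc {gb : Bool} {X : Set (BaseVert n S)} {i : Fin n} {g s : Bool}
    (hhub : (BaseVert.hub : BaseVert n S) ∈ X) (harc : ∀ q, (BaseVert.arc i g s q) ∈ X)
    (p : Fin S) :
    ((baseGraph n S gb).induce X).Reachable ⟨.hub, hhub⟩ ⟨.arc i g s p, harc p⟩ := by
  obtain ⟨pv, hp⟩ := p
  induction pv with
  | zero => exact reach_of_adj _ _ (adj_hub_arc0 rfl)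
  | succ k ih =>
      exact (ih (by omega)).trans
        (reach_of_adj _ _ (adj_arc_succ (p := ⟨k, by omega⟩) (q := ⟨k+1, hp⟩) rfl))

lemma reach_arc_far {gb : Bool} {X : Set (BaseVert n S)} {i : Fin n} {g s : Bool}
    (hS : 1 ≤ S) (hfar : (BaseVert.far i g : BaseVert n S) ∈ X)
    (harc : ∀ q, (BaseVert.arc i g s q) ∈ X) (p : Fin S) :
    ((baseGraph n S gb).induce X).Reachable ⟨.arc i g s p, harc p⟩ ⟨.far i g, hfar⟩ := by
  have key : ∀ k, k < S →
      ((baseGraph n S gb).induce X).Reachable ⟨.arc i g s ⟨S-1-k, by omega⟩, harc _⟩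
        ⟨.far i g, hfar⟩ := by
    intro k
    induction k with
    | zero => intro _; exact reach_of_adj _ _ (adj_arc_far (by simp; omega))
    | succ k ih =>
        intro hk
        refine (reach_of_adj _ _ (adj_arc_succ (q := ⟨S-1-k, by omega⟩) (by simp; omega))).trans
          (ih (by omega))
  have hp : p = ⟨S - 1 - (S - 1 - p.val), by omega⟩ := by apply Fin.ext; simp; omega
  rw [show (⟨.arc i g s p, harc p⟩ : X) = ⟨.arc i g s ⟨S-1-(S-1-p.val), by omega⟩, harc _⟩ by
    simp [← hp]]
  exact key _ (by omega)

lemma ncard_range_inj {α β : Type*} [Fintype α] {f : α → β} (hf : Function.Injective f) :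
    (Set.range f).ncard = Fintype.card α := by
  rw [← Nat.card_coe_set_eq (Set.range f),
    Nat.card_congr (Equiv.ofInjective f hf).symm, Nat.card_eq_fintype_card]

lemma ncard_le_of_range_superset {α β : Type*} [Fintype α] [Fintype β] {f : α → β}
    (hf : Function.Injective f) {K : Set β} (hK : K ⊆ Set.range f) :
    K.ncard ≤ Fintype.card α := by
  rw [← ncard_range_inj hf]
  exact Set.ncard_le_ncard hK (Set.toFinite _)

lemma ncard_ge_of_range_subset {α β : Type*} [Fintype α] [Fintype β] {f : α → β}
    (hf : Function.Injective f) {K : Set β} (hK : Set.range f ⊆ K) :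
    Fintype.card α ≤ K.ncard := by
  rw [← ncard_range_inj hf]
  exact Set.ncard_le_ncard hK (Set.toFinite _)

-- the D gadget i (plus one extra vertex) as ranges
def gadFun (n S : ℕ) (i : Fin n) (g : Bool) : (Bool × Fin S) ⊕ Fin 3 → BaseVert n S
  | .inl (s, p) => .arc i g s p
  | .inr t => if t = 0 then .far i g else if t = 1 then .panchor i g else .anchor i g

lemma gadFun_inj {i : Fin n} {g : Bool} : Function.Injective (gadFun n S i g) := by
  rintro (⟨s, p⟩ | t) (⟨s', p'⟩ | t') h
  · simpa [gadFun] using by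
      obtain ⟨h1, h2⟩ := (by simpa [gadFun] using h : s = s' ∧ p = p'); simp [h1, h2]
  · exfalso; fin_cases t' <;> simp [gadFun] at h
  · exfalso; fin_cases t <;> simp [gadFun] at h
  · fin_cases t <;> fin_cases t' <;> simp_all [gadFun]

def Rex (n S : ℕ) : Set (BaseVert n S) := {v | ∀ j, v ≠ .apmid j}

lemma baseRel_gb_iff {gb gb' : Bool} {u v : BaseVert n S}
    (hv : ∀ j, v ≠ BaseVert.apmid j) : baseRel n S gb u v ↔ baseRel n S gb' u v := by
  cases u <;> cases v <;> first | rfl | exact absurd rfl (hv _)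

lemma rex_connected {gb : Bool} (hS : 1 ≤ S) :
    ((baseGraph n S gb).induce (Rex n S)).Connected := by
  have hhub : (BaseVert.hub : BaseVert n S) ∈ Rex n S := by intro j h; cases h
  have harc : ∀ (i : Fin n) (g s : Bool) (q : Fin S),
      (BaseVert.arc i g s q : BaseVert n S) ∈ Rex n S := by intro _ _ _ _ j h; cases h
  have hfar : ∀ (i : Fin n) (g : Bool), (BaseVert.far i g : BaseVert n S) ∈ Rex n S := by
    intro _ _ j h; cases h
  have hpan : ∀ (i : Fin n) (g : Bool), (BaseVert.panchor i g : BaseVert n S) ∈ Rex n S := by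
    intro _ _ j h; cases h
  have hanc : ∀ (i : Fin n) (g : Bool), (BaseVert.anchor i g : BaseVert n S) ∈ Rex n S := by
    intro _ _ j h; cases h
  have key : ∀ v : Rex n S, ((baseGraph n S gb).induce (Rex n S)).Reachable ⟨.hub, hhub⟩ v := by
    rintro ⟨v, hv⟩
    have reach_far : ∀ (i : Fin n) (g : Bool),
        ((baseGraph n S gb).induce (Rex n S)).Reachable ⟨.hub, hhub⟩ ⟨.far i g, hfar i g⟩ := by
      intro i g
      exact (reach_hub_arc hhub (harc i g false) ⟨S-1, by omega⟩).trans
        (reach_of_adj _ _ (adj_arc_far (by simp; omega)))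
    cases v with
    | hub => rfl
    | arc i g s p => exact reach_hub_arc hhub (harc i g s) p
    | far i g => exact reach_far i g
    | panchor i g => exact (reach_far i g).trans (reach_of_adj (hfar i g) hv adj_far_panchor)
    | anchor i g =>
        exact ((reach_far i g).trans (reach_of_adj (hfar i g) (hpan i g) adj_far_panchor)).trans
          (reach_of_adj (hpan i g) hv adj_panchor_anchor)
    | apmid j => exact absurd rfl (hv j)
  have : Nonempty (Rex n S) := ⟨⟨.hub, hhub⟩⟩
  exact ⟨fun u v => (key u).symm.trans (key v)⟩

lemma existence (hn : 1 ≤ n) (hS : 1 ≤ S) :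
    ∃ R S' : Set (BaseVert n S),
      IsCCIS (baseGraph n S true) (baseGraph n S false) R S' ∧
      R.ncard = Fintype.card (BaseVert n S) - n + 1 := by
  classical
  refine ⟨Rex n S, Rex n S, ⟨rex_connected hS, ⟨⟨Equiv.refl _, ?_⟩⟩⟩, ?_⟩
  · rintro ⟨u, hu⟩ ⟨v, hv⟩
    show (baseGraph n S false).Adj u v ↔ (baseGraph n S true).Adj u v
    rw [baseGraph, baseGraph, SimpleGraph.fromRel_adj, SimpleGraph.fromRel_adj,
      baseRel_gb_iff (gb' := true) hv, baseRel_gb_iff (gb := false) (gb' := true) hu]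
  · have hcompl : (Rex n S)ᶜ = Set.range (BaseVert.apmid : Fin (n-1) → BaseVert n S) := by
      ext v
      simp only [Set.mem_compl_iff, Rex, Set.mem_setOf_eq, not_forall, not_ne_iff,
        Set.mem_range]
      exact ⟨fun ⟨j, h⟩ => ⟨j, h.symm⟩, fun ⟨j, h⟩ => ⟨j, h.symm⟩⟩
    have h1 : (Rex n S)ᶜ.ncard = n - 1 := by
      rw [hcompl, ncard_range_inj (fun a b h => by simpa using h)]
      simp
    have h2 := Set.ncard_add_ncard_compl (Rex n S)
    have h3 : 0 < (Rex n S).ncard :=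
      (Set.ncard_pos (Set.toFinite _)).mpr ⟨.hub, fun j h => by cases h⟩
    rw [← Nat.card_eq_fintype_card]
    omega

lemma adj_arc_chord {gb : Bool} {i : Fin n} {p : Fin S} (hp : p.val + 1 = S) :
    (baseGraph n S gb).Adj (.arc i true false p) (.arc i true true p) := by
  rw [baseGraph, SimpleGraph.fromRel_adj]
  exact ⟨by simp, Or.inl ⟨rfl, rfl, Or.inr ⟨rfl, by simp, Or.inr ⟨hp, hp⟩⟩⟩⟩

lemma gadSet_sub {i : Fin n} {g : Bool} :
    gadSet n S i g ⊆ Set.range (gadFun n S i g) := by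
  intro v hv
  cases v with
  | arc i' g' s p => obtain ⟨rfl, rfl⟩ := hv; exact ⟨.inl (s, p), rfl⟩
  | far i' g' => obtain ⟨rfl, rfl⟩ := hv; exact ⟨.inr 0, rfl⟩
  | panchor i' g' => obtain ⟨rfl, rfl⟩ := hv; exact ⟨.inr 1, rfl⟩
  | anchor i' g' => obtain ⟨rfl, rfl⟩ := hv; exact ⟨.inr 2, rfl⟩
  | hub => exact absurd hv (by simp [gadSet])
  | apmid => exact absurd hv (by simp [gadSet])

lemma gadFun_mem_gadSet {i : Fin n} {g : Bool} (x : (Bool × Fin S) ⊕ Fin 3) :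
    gadFun n S i g x ∈ gadSet n S i g := by
  rcases x with ⟨s, p⟩ | t
  · exact ⟨rfl, rfl⟩
  · fin_cases t <;> exact ⟨rfl, rfl⟩

lemma gadFun_index {i i' : Fin n} {g g' : Bool} {x y}
    (h : gadFun n S i g x = gadFun n S i' g' y) : i = i' := by
  rcases x with ⟨s, p⟩ | t <;> rcases y with ⟨s', p'⟩ | t' <;>
    [skip; fin_cases t'; fin_cases t; (fin_cases t <;> fin_cases t')] <;>
    simp_all [gadFun]

lemma gadFun_ne_apmid {i : Fin n} {g : Bool} {x} {j : Fin (n-1)} :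
    gadFun n S i g x ≠ .apmid j := by
  rcases x with ⟨s, p⟩ | t
  · simp [gadFun]
  · fin_cases t <;> simp [gadFun]

lemma gadFun_ne_hub {i : Fin n} {g : Bool} {x} :
    gadFun n S i g x ≠ .hub := by
  rcases x with ⟨s, p⟩ | t
  · simp [gadFun]
  · fin_cases t <;> simp [gadFun]

lemma iso_connected {α β : Type*} {G : SimpleGraph α} {H : SimpleGraph β}
    (φ : G ≃g H) (h : G.Connected) : H.Connected := by
  have : Nonempty β := ⟨φ h.nonempty.some⟩
  refine ⟨fun u v => ?_⟩
  have := (h.preconnected (φ.symm u) (φ.symm v)).map φ.toHom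
  simpa using this

lemma hub_mem {gb : Bool} (hn : 2 ≤ n) {R : Set (BaseVert n S)}
    (hconn : ((baseGraph n S gb).induce R).Connected)
    (hmiss : Rᶜ.ncard ≤ n - 2) : (BaseVert.hub : BaseVert n S) ∈ R := by
  by_contra hhub
  obtain ⟨⟨r0, hr0⟩⟩ := hconn.nonempty
  have hr0ne : r0 ≠ .hub := fun h => hhub (h ▸ hr0)
  have hsub : ∀ (K : Set (BaseVert n S)),
      (∀ a b : BaseVert n S, a ∈ K → b ≠ .hub → (baseGraph n S gb).Adj a b → b ∈ K) →
      r0 ∈ K → R ⊆ K := by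
    intro K hK hr0K v hv
    exact reach_closed hhub hK (hconn.preconnected ⟨r0, hr0⟩ ⟨v, hv⟩) hr0K
  have key : ∃ f : Fin n → BaseVert n S, Function.Injective f ∧ Set.range f ⊆ Rᶜ := by
    rcases cover (gb := gb) hr0ne with hblock | ⟨i, hgad⟩
    · have hRK := hsub _ (fun a b => block_closed) hblock
      refine ⟨fun i' => .anchor i' (!gb), fun a b h => by simpa using h, ?_⟩
      rintro _ ⟨i', rfl⟩ hmem
      exact anchor_not_block (hRK hmem)
    · have hRK := hsub _ (fun a b ha => gad_closed (by simp) ha) hgad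
      refine ⟨fun i' => .anchor i' gb, fun a b h => by simpa using h, ?_⟩
      rintro _ ⟨i', rfl⟩ hmem
      exact anchor_not_gad (by simp) (hRK hmem)
  obtain ⟨f, hfinj, hfsub⟩ := key
  have := ncard_ge_of_range_subset hfinj hfsub
  simp at this
  omega

lemma phi_hub {R S' : Set (BaseVert n S)} (hn : 2 ≤ n) (hS : 2 ≤ S)
    (φ : (baseGraph n S true).induce R ≃g (baseGraph n S false).induce S')
    (hR : .hub ∈ R) (hS' : .hub ∈ S') (hmiss : Rᶜ.ncard ≤ n - 2) :
    (φ ⟨.hub, hR⟩ : BaseVert n S) = .hub := by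
  classical
  by_contra hne
  obtain ⟨l, hl4, hl⟩ := nbhd_small (gb := false) hS hne
  -- the set of R-neighbours of hub in B_G
  set A : Set (BaseVert n S) := {w | w ∈ R ∧ (baseGraph n S true).Adj .hub w} with hA
  -- lower bound
  have harc0 : Set.range (fun x : Fin n × Bool × Bool =>
      (BaseVert.arc x.1 x.2.1 x.2.2 ⟨0, by omega⟩ : BaseVert n S)) \ Rᶜ ⊆ A := by
    rintro w ⟨⟨⟨i, g, s⟩, rfl⟩, hw⟩
    exact ⟨by simpa using hw, adj_hub_arc0 rfl⟩
  have hlow : 3 * n + 2 ≤ A.ncard := by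
    have h1 := Set.ncard_le_ncard harc0 (Set.toFinite _)
    have h2 := Set.ncard_le_ncard_diff_add_ncard
      (Set.range (fun x : Fin n × Bool × Bool =>
        (BaseVert.arc x.1 x.2.1 x.2.2 ⟨0, by omega⟩ : BaseVert n S))) Rᶜ (Set.toFinite _)
    have h3 : (Set.range (fun x : Fin n × Bool × Bool =>
        (BaseVert.arc x.1 x.2.1 x.2.2 ⟨0, by omega⟩ : BaseVert n S))).ncard = 4 * n := by
      rw [ncard_range_inj]
      · simp; ring
      · rintro ⟨a, b, c⟩ ⟨a', b', c'⟩ h; simpa [Prod.ext_iff] using h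
    omega
  -- upper bound: map into the neighbour list of φ(hub)
  have hup : A.ncard ≤ 4 := by
    have hemb : ∀ w (hw : w ∈ A), (φ ⟨w, hw.1⟩ : BaseVert n S) ∈ l := by
      intro w hw
      refine hl _ ?_
      have : ((baseGraph n S false).induce S').Adj (φ ⟨.hub, hR⟩) (φ ⟨w, hw.1⟩) :=
        φ.map_rel_iff.mpr hw.2
      exact this
    have : Function.Injective (fun w : A => (⟨(φ ⟨w.1, w.2.1⟩ : BaseVert n S),
        hemb w.1 w.2⟩ : {x // x ∈ l})) := by
      rintro ⟨w, hw⟩ ⟨w', hw'⟩ h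
      simp only [Subtype.mk.injEq] at h ⊢
      have := φ.injective (Subtype.ext h)
      simpa using this
    have hcard := Nat.card_le_card_of_injective _ this
    rw [Nat.card_coe_set_eq] at hcard
    have h5 := Nat.card_le_card_of_injective
      (fun x : {x // x ∈ l} => (⟨l.idxOf x.1, List.idxOf_lt_length_iff.mpr x.2⟩ : Fin l.length))
      (fun a b h => by
        simpa using Subtype.ext (List.idxOf_inj a.2 |>.mp (by simpa using h)))
    have h6 : Nat.card (Fin l.length) = l.length := by simp
    omega
  omega

lemma apmid_missing {R S' : Set (BaseVert n S)} (hS : 2 ≤ S)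
    (φ : (baseGraph n S true).induce R ≃g (baseGraph n S false).induce S')
    (hR : .hub ∈ R) (hS' : .hub ∈ S')
    (hφ : (φ ⟨.hub, hR⟩ : BaseVert n S) = .hub)
    {i : Fin n} {j : Fin (n - 1)} (hij : i.val = j.val)
    (hintact : ∀ x, gadFun n S i true x ∈ R)
    (hap : (BaseVert.apmid j : BaseVert n S) ∈ R) : False := by
  classical
  set X : Set (BaseVert n S) := {v | v ∈ R ∧ v ≠ .hub} with hX
  set X' : Set (BaseVert n S) := {v | v ∈ S' ∧ v ≠ .hub} with hX'
  have hXhub : (BaseVert.hub : BaseVert n S) ∉ X := fun h => h.2 rfl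
  have hX'hub : (BaseVert.hub : BaseVert n S) ∉ X' := fun h => h.2 rfl
  have hmem : ∀ x : X, (φ ⟨x.1, x.2.1⟩ : BaseVert n S) ∈ X' := by
    rintro ⟨x, hxR, hxne⟩
    refine ⟨(φ ⟨x, hxR⟩).2, fun h => hxne ?_⟩
    have h2 : φ ⟨x, hxR⟩ = φ ⟨.hub, hR⟩ := Subtype.ext (h.trans hφ.symm)
    simpa using congrArg Subtype.val (φ.injective h2)
  let ψ : (baseGraph n S true).induce X →g (baseGraph n S false).induce X' :=
    ⟨fun x => ⟨(φ ⟨x.1, x.2.1⟩ : BaseVert n S), hmem x⟩, by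
      rintro ⟨a, haR, hane⟩ ⟨b, hbR, hbne⟩ h
      exact φ.map_rel_iff.mpr (by exact h)⟩
  have hψinj : ∀ a b : X, ψ a = ψ b → a = b := by
    rintro ⟨a, ha⟩ ⟨b, hb⟩ h
    have h1 := congrArg Subtype.val h
    have h1' : (φ ⟨a, ha.1⟩ : BaseVert n S) = ↑(φ ⟨b, hb.1⟩) := h1
    have h2 := φ.injective (Subtype.ext h1')
    exact Subtype.ext (by simpa using congrArg Subtype.val h2)
  -- memberships of the gadget vertices
  have harcR : ∀ (s : Bool) (p : Fin S), (BaseVert.arc i true s p : BaseVert n S) ∈ R :=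
    fun s p => hintact (.inl (s, p))
  have hfarR : (BaseVert.far i true : BaseVert n S) ∈ R := by
    simpa [gadFun] using hintact (.inr 0)
  have hpanR : (BaseVert.panchor i true : BaseVert n S) ∈ R := by
    simpa [gadFun] using hintact (.inr 1)
  have harcX : ∀ (s : Bool) (p : Fin S), (BaseVert.arc i true s p : BaseVert n S) ∈ X :=
    fun s p => ⟨harcR s p, by simp⟩
  have hfarX : (BaseVert.far i true : BaseVert n S) ∈ X := ⟨hfarR, by simp⟩
  have hpanX : (BaseVert.panchor i true : BaseVert n S) ∈ X := ⟨hpanR, by simp⟩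
  have hapX : (BaseVert.apmid j : BaseVert n S) ∈ X := ⟨hap, by simp⟩
  -- the extended gadget
  let WF : ((Bool × Fin S) ⊕ Fin 3) ⊕ Unit → BaseVert n S :=
    Sum.elim (gadFun n S i true) (fun _ => .apmid j)
  have hWmem : ∀ x, WF x ∈ X := by
    rintro (x | u)
    · exact ⟨hintact x, gadFun_ne_hub⟩
    · exact hapX
  have hWinj : Function.Injective WF := by
    rintro (x | u) (y | u') h
    · exact congrArg Sum.inl (gadFun_inj h)
    · exact absurd h gadFun_ne_apmid
    · exact absurd h.symm gadFun_ne_apmid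
    · simp
  -- reachability inside X from far i true
  have hreach_pan : ((baseGraph n S true).induce X).Reachable
      ⟨.far i true, hfarX⟩ ⟨.panchor i true, hpanX⟩ :=
    reach_of_adj _ _ adj_far_panchor
  have reachW : ∀ x, ((baseGraph n S true).induce X).Reachable
      ⟨.far i true, hfarX⟩ ⟨WF x, hWmem x⟩ := by
    rintro ((⟨s, p⟩ | t) | u)
    · exact (reach_arc_far (by omega) hfarX (harcX s) p).symm
    · fin_cases t
      · rfl
      · exact hreach_pan
      · exact hreach_pan.trans (reach_of_adj _ _ adj_panchor_anchor)
    · exact hreach_pan.trans (reach_of_adj _ _ (adj_panchor_apmid (Or.inl hij)))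
  -- the triangle at far i true
  have hlast : ((⟨S - 1, by omega⟩ : Fin S)).val + 1 = S := by simp; omega
  set a0 : X := ⟨.far i true, hfarX⟩ with ha0
  set a1 : X := ⟨.arc i true false ⟨S-1, by omega⟩, harcX _ _⟩ with ha1
  set a2 : X := ⟨.arc i true true ⟨S-1, by omega⟩, harcX _ _⟩ with ha2
  have hadj01 : ((baseGraph n S true).induce X).Adj a0 a1 := (adj_arc_far hlast).symm
  have hadj02 : ((baseGraph n S true).induce X).Adj a0 a2 := (adj_arc_far hlast).symm
  have hadj12 : ((baseGraph n S true).induce X).Adj a1 a2 := adj_arc_chord hlast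
  have hb0 : ((ψ a0 : X') : BaseVert n S) ≠ .hub := (ψ a0).2.2
  rcases cover (gb := false) hb0 with hblock | ⟨i', hgad⟩
  · -- image triangle would lie in the triangle-free C-block
    have h1 : ((baseGraph n S false)).Adj ↑(ψ a0) ↑(ψ a1) := ψ.map_rel' hadj01
    have h2 : ((baseGraph n S false)).Adj ↑(ψ a1) ↑(ψ a2) := ψ.map_rel' hadj12
    have h3 : ((baseGraph n S false)).Adj ↑(ψ a0) ↑(ψ a2) := ψ.map_rel' hadj02
    exact block_triangle_free hblock
      (block_closed hblock (ψ a1).2.2 h1)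
      (block_closed (block_closed hblock (ψ a1).2.2 h1) (ψ a2).2.2 h2) h1 h2 h3
  · -- image of the extended gadget lies in a (2S+3)-element D-gadget
    have hclose : ∀ x, ((ψ ⟨WF x, hWmem x⟩ : X') : BaseVert n S) ∈ gadSet n S i' true := by
      intro x
      refine reach_closed hX'hub (fun a b ha hb hadj => gad_closed (by simp) ha hb hadj)
        ((reachW x).map ψ) hgad
    set f : ((Bool × Fin S) ⊕ Fin 3) ⊕ Unit → BaseVert n S :=
      fun x => ((ψ ⟨WF x, hWmem x⟩ : X') : BaseVert n S) with hf
    have hfinj : Function.Injective f := by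
      intro x y h
      have := hψinj _ _ (Subtype.ext h)
      exact hWinj (by simpa using congrArg Subtype.val this)
    have hge := ncard_ge_of_range_subset hfinj (by rintro _ ⟨x, rfl⟩; exact hclose x)
    have hle := ncard_le_of_range_superset (f := gadFun n S i' true) gadFun_inj gadSet_sub
    simp only [Fintype.card_sum, Fintype.card_prod, Fintype.card_bool, Fintype.card_fin,
      Fintype.card_unit] at hge hle
    omega

lemma upper_bound (hn : 2 ≤ n) (hS : 2 ≤ S) {R S' : Set (BaseVert n S)}
    (hcc : IsCCIS (baseGraph n S true) (baseGraph n S false) R S') :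
    n - 1 ≤ Rᶜ.ncard := by
  classical
  by_contra hcon
  push_neg at hcon
  have hmiss : Rᶜ.ncard ≤ n - 2 := by omega
  obtain ⟨hconn, ⟨φ⟩⟩ := hcc
  have hcardRS : R.ncard = S'.ncard := by
    rw [← Nat.card_coe_set_eq, ← Nat.card_coe_set_eq]
    exact Nat.card_congr φ.toEquiv
  have hcomplR := Set.ncard_add_ncard_compl R
  have hcomplS := Set.ncard_add_ncard_compl S'
  have hmissS : S'ᶜ.ncard ≤ n - 2 := by omega
  have hRhub : (BaseVert.hub : BaseVert n S) ∈ R := hub_mem hn hconn hmiss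
  have hS'conn : ((baseGraph n S false).induce S').Connected := iso_connected φ hconn
  have hS'hub : (BaseVert.hub : BaseVert n S) ∈ S' := hub_mem hn hS'conn hmissS
  have hφhub := phi_hub hn hS φ hRhub hS'hub hmiss
  have key : ∀ j : Fin (n - 1), (BaseVert.apmid j : BaseVert n S) ∈ R →
      ∃ x, gadFun n S ⟨j.val, by omega⟩ true x ∉ R := by
    intro j hap
    by_contra hax
    push_neg at hax
    exact apmid_missing hS φ hRhub hS'hub hφhub (i := ⟨j.val, by omega⟩) rfl hax hap
  let h : Fin (n - 1) → BaseVert n S := fun j =>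
    if hap : (BaseVert.apmid j : BaseVert n S) ∈ R then
      gadFun n S ⟨j.val, by omega⟩ true (Classical.choose (key j hap))
    else .apmid j
  have hrange : ∀ j, h j ∈ Rᶜ := by
    intro j
    by_cases hap : (BaseVert.apmid j : BaseVert n S) ∈ R
    · simpa [h, hap] using Classical.choose_spec (key j hap)
    · simpa [h, hap] using hap
  have hinj : Function.Injective h := by
    intro j j' heq
    simp only [h] at heq
    split_ifs at heq with h1 h2 h2
    · have := gadFun_index heq
      exact Fin.ext (by simpa [Fin.ext_iff] using this)
    · exact absurd heq gadFun_ne_apmid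
    · exact absurd heq.symm gadFun_ne_apmid
    · simpa using heq
  have hge := ncard_ge_of_range_subset hinj (by rintro _ ⟨j, rfl⟩; exact hrange j)
  simp only [Fintype.card_fin] at hge
  omega

/-- For every instance of Numerical Matching with Target Sums
(`n ≥ 1`, positive values `sx i`, `sy i` and positive targets `b i`), a maximum
common connected induced subgraph of the base gadgets `B_G` and `B_H` has exactly
`|V(B_G)| - n + 1` vertices. -/
theorem mcs_baseGadgets (n : ℕ) (hn : 1 ≤ n) (sx sy b : Fin n → ℕ)
    (hsx : ∀ i, 1 ≤ sx i) (hsy : ∀ i, 1 ≤ sy i) (hb : ∀ i, 1 ≤ b i) :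
    (∃ (R S : Set (BaseVert n (SigmaS n sx sy))),
        IsCCIS (baseGraph n (SigmaS n sx sy) true) (baseGraph n (SigmaS n sx sy) false) R S ∧
        R.ncard = Fintype.card (BaseVert n (SigmaS n sx sy)) - n + 1) ∧
    (∀ (R S : Set (BaseVert n (SigmaS n sx sy))),
        IsCCIS (baseGraph n (SigmaS n sx sy) true) (baseGraph n (SigmaS n sx sy) false) R S →
        R.ncard ≤ Fintype.card (BaseVert n (SigmaS n sx sy)) - n + 1) := by
  classical
  have hS2 : 2 * n ≤ SigmaS n sx sy := by
    rw [SigmaS]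
    calc 2 * n = ∑ _i : Fin n, 2 := by simp [mul_comm]
    _ ≤ ∑ i, (sx i + sy i) :=
        Finset.sum_le_sum (fun i _ => by have := hsx i; have := hsy i; omega)
  have hS : 2 ≤ SigmaS n sx sy := by omega
  constructor
  · exact existence hn (by omega)
  · intro R S' hcc
    have hge := Set.ncard_add_ncard_compl R
    rw [Nat.card_eq_fintype_card] at hge
    have hn1 : n - 1 ≤ Rᶜ.ncard := by
      by_cases h2 : 2 ≤ n
      · exact upper_bound h2 hS hcc
      · omega
    omega


end MCSPaper
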